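/- arXiv:1705.01657 — 3 statements merged into one kernel-verified Lean document; each statement's English description precedes it below -/
import Mathlib

section
/- Let R be a commutative ring, μ ∈ R, and let (x₁,y₁,z₁), (x₂,y₂,z₂) ∈ R³ both satisfy x³ + y³ + z³ = 3μxyz. Set x₃ = x₂y₁²z₂ − x₁y₂²z₁, y₃ = x₁²y₂z₂ − x₂²y₁z₁, z₃ = x₂y₂z₁² − x₁y₁z₂². Then x₃³ + y₃³ + z₃³ = 3μ x₃y₃z₃. -/
theorem hessian_addition_formula
    (R : Type*) [CommRing R] (μ : R) (x₁ y₁ z₁ x₂ y₂ z₂ : R)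
    (h₁ : x₁ ^ 3 + y₁ ^ 3 + z₁ ^ 3 = 3 * μ * (x₁ * y₁ * z₁))
    (h₂ : x₂ ^ 3 + y₂ ^ 3 + z₂ ^ 3 = 3 * μ * (x₂ * y₂ * z₂)) :
    (x₂ * y₁ ^ 2 * z₂ - x₁ * y₂ ^ 2 * z₁) ^ 3 + (x₁ ^ 2 * y₂ * z₂ - x₂ ^ 2 * y₁ * z₁) ^ 3 +
        (x₂ * y₂ * z₁ ^ 2 - x₁ * y₁ * z₂ ^ 2) ^ 3 =
      3 * μ * ((x₂ * y₁ ^ 2 * z₂ - x₁ * y₂ ^ 2 * z₁) * (x₁ ^ 2 * y₂ * z₂ - x₂ ^ 2 * y₁ * z₁) *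
        (x₂ * y₂ * z₁ ^ 2 - x₁ * y₁ * z₂ ^ 2)) := by
  linear_combination
    (- z₁ ^ 3 * y₂ ^ 3 * z₂ ^ 3 - z₁ ^ 3 * y₂ ^ 6 - y₁ ^ 3 * z₂ ^ 6 - y₁ ^ 3 * y₂ ^ 3 * z₂ ^ 3
      - 3 * x₁ * y₁ * z₁ * x₂ ^ 2 * y₂ ^ 2 * z₂ ^ 2 + x₁ ^ 3 * y₂ ^ 3 * z₂ ^ 3
      + 3 * μ * z₁ ^ 3 * x₂ * y₂ ^ 4 * z₂ + 3 * μ * y₁ ^ 3 * x₂ * y₂ * z₂ ^ 4) * h₁ +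
    (z₁ ^ 6 * y₂ ^ 3 + y₁ ^ 3 * z₁ ^ 3 * z₂ ^ 3 + y₁ ^ 3 * z₁ ^ 3 * y₂ ^ 3
      - y₁ ^ 3 * z₁ ^ 3 * x₂ ^ 3 + y₁ ^ 6 * z₂ ^ 3 + 3 * x₁ ^ 2 * y₁ ^ 2 * z₁ ^ 2 * x₂ * y₂ * z₂
      - 3 * μ * x₁ * y₁ * z₁ ^ 4 * y₂ ^ 3 - 3 * μ * x₁ * y₁ ^ 4 * z₁ * z₂ ^ 3) * h₂
end

section
/- Let k be a field of characteristic ≠ 3 of the form 𝔽_q, let β ∈ k, and suppose the line y = ax + c (with a ∈ k) is a flex tangent to the affine curve x³ + y³ + β = 3xy, in the sense that the polynomial (a³+1)x³ + 3a(ac−1)x² + 3c(ac−1)x + (c³+β) is a constant multiple of (x+ℓ)³ for some ℓ ∈ k, with a³ ≠ −1. Then β is a cube in k. -/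
open Polynomial in
/-- If the line `y = ax + c` is a flex tangent to `x³ + y³ + β = 3xy` over a finite
field of characteristic ≠ 3 (with `a³ ≠ −1`), then `β` is a cube. -/
theorem flex_tangent_beta_is_cube
    (k : Type*) [Field k] [Fintype k] (h3 : ringChar k ≠ 3)
    (β a c : k) (ha : a ^ 3 ≠ -1)
    (hflex : ∃ ℓ d : k,
      (C (a ^ 3 + 1) * X ^ 3 + C (3 * a * (a * c - 1)) * X ^ 2 +
          C (3 * c * (a * c - 1)) * X + C (c ^ 3 + β) : Polynomial k) =
        C d * (X + C ℓ) ^ 3) :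
    ∃ r : k, β = r ^ 3 := by
  have h3' : (3 : k) ≠ 0 := by
    intro h
    have hd : ringChar k ∣ 3 := ringChar.dvd (by exact_mod_cast h)
    rcases (Nat.prime_three.eq_one_or_self_of_dvd _ hd) with h1 | h1
    · have : (1:k) = 0 := by
        have := CharP.cast_eq_zero k (ringChar k)
        rw [h1] at this; exact_mod_cast this
      simp at this
    · exact h3 h1
  obtain ⟨ℓ, d, h⟩ := hflex
  have e0 := congrArg (fun p => p.coeff 0) h
  have e1 := congrArg (fun p => p.coeff 1) h
  have e2 := congrArg (fun p => p.coeff 2) h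
  have e3 := congrArg (fun p => p.coeff 3) h
  simp only [coeff_add, coeff_C_mul, coeff_X_pow, coeff_C, coeff_X, coeff_X_add_C_pow] at e0 e1 e2 e3
  norm_num at e0 e1 e2 e3
  have hd : d ≠ 0 := by
    intro h0
    apply ha
    linear_combination e3 + h0
  have e2' : a * (a * c - 1) = d * ℓ := by
    apply mul_right_cancel₀ h3'
    linear_combination e2
  have e1' : c * (a * c - 1) = d * ℓ ^ 2 := by
    apply mul_right_cancel₀ h3'
    linear_combination e1
  by_cases hac : a * c - 1 = 0
  · have hℓ : ℓ = 0 := by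
      have h0 : d * ℓ = 0 := by rw [← e2', hac, mul_zero]
      exact (mul_eq_zero.mp h0).resolve_left hd
    exact ⟨-c, by rw [hℓ] at e0; linear_combination e0⟩
  · have hcd : c * d = a ^ 2 * (a * c - 1) := by
      apply mul_right_cancel₀ hac
      apply mul_right_cancel₀ hd
      linear_combination d^2 * e1' - d*(a*(a*c-1)+d*ℓ) * e2'
    have hc : c = -a ^ 2 := by
      have h1 : c * (a ^ 3 + 1) = a ^ 2 * (a * c - 1) := by rw [e3]; exact hcd
      linear_combination h1
    have hℓ : ℓ = -a := by
      apply mul_left_cancel₀ hd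
      have : a * c - 1 = -d := by rw [hc, ← e3]; ring
      linear_combination -e2' + a * this
    refine ⟨-a, ?_⟩
    rw [hℓ, hc] at e0
    linear_combination e0 + a^3 * e3
end

section
/- Let G be a group, H ⊴ G a normal subgroup of finite index, and suppose the projection G → G/H admits a section with image a subgroup Σ ⊆ G (so every g ∈ G is uniquely g = hσ with h ∈ H, σ ∈ Σ). Let N be a left H-module and f : H → N a 1-cocycle. Define s : G → Hom_{ℤ[H]}(ℤ[G], N) by s(hσ)([ξ]) = f(ξhξ⁻¹) for h ∈ H, σ, ξ ∈ Σ, extended ℤ[H]-linearly in the variable. Then s is a 1-cocycle for G with values in the induced module Ind_H^G N = Hom_{ℤ[H]}(ℤ[G], N), and its restriction to H followed by evaluation at [e] equals f. -/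
/-- Given a normal subgroup `H ⊴ G` with factorization data `g = ρH(g) · rhoS(g)`,
an `H`-module `N` and `f : H → N`, the Shapiro 1-cochain
`s : G → (ℤ[G] → N)`, described on group elements by
`s(g)(x) = ρH(x) • f( rhoS(x) · ρH(g) · rhoS(x)⁻¹ )` (the `ℤ[H]`-linear extension in
the variable `x` of `s(hσ)([ξ]) = f(ξ h ξ⁻¹)`). -/
def shapiroCochain {G : Type*} [Group G] {N : Type*} [AddCommGroup N]
    {H : Subgroup G} [DistribMulAction H N] (hH : H.Normal)
    (ρH : G → H) (rhoS : G → G) (f : H → N) : G → G → N :=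
  fun g x =>
    (ρH x) • f ⟨rhoS x * (ρH g : G) * (rhoS x)⁻¹, hH.conj_mem (ρH g : G) (ρH g).2 (rhoS x)⟩

/-- Shapiro's lemma on inhomogeneous 1-cocycles: if `G = H ⋊ Σ` with `H` normal
of finite index, `N` is an `H`-module and `f : H → N` is a 1-cocycle, then the
function `s(hσ)([ξ]) = f(ξhξ⁻¹)` (extended `ℤ[H]`-linearly) is a 1-cocycle of
`G` with values in the induced module
`Ind_H^G N = Hom_{ℤ[H]}(ℤ[G], N) = {φ : G → N | φ(h·x) = h • φ(x)}`
(with `G`-action `(g·φ)(x) = φ(xg)`), and evaluating its restriction to `H`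
at `[e]` recovers `f`. -/
theorem shapiro_one_cocycle
    (G : Type*) [Group G] (N : Type*) [AddCommGroup N]
    (H : Subgroup G) [DistribMulAction H N] (hH : H.Normal) [H.FiniteIndex]
    (Sig : Subgroup G) (ρH : G → H) (rhoS : G → G)
    (hrhoS : ∀ g : G, rhoS g ∈ Sig)
    (hfact : ∀ g : G, (ρH g : G) * rhoS g = g)
    (huniq : ∀ (h : H) (σ : G), σ ∈ Sig → ρH ((h : G) * σ) = h ∧ rhoS ((h : G) * σ) = σ)
    (f : H → N) (hf : ∀ h₁ h₂ : H, f (h₁ * h₂) = h₁ • f h₂ + f h₁) :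
    -- each `s(g)` is `ℤ[H]`-linear, i.e. lies in the induced module
    (∀ (g : G) (h : H) (x : G),
        shapiroCochain hH ρH rhoS f g ((h : G) * x) = h • shapiroCochain hH ρH rhoS f g x) ∧
    -- `s` is a 1-cocycle: `s(g₁g₂) = g₁ · s(g₂) + s(g₁)`, where `(g·φ)(x) = φ(xg)`
    (∀ g₁ g₂ x : G,
        shapiroCochain hH ρH rhoS f (g₁ * g₂) x =
          shapiroCochain hH ρH rhoS f g₂ (x * g₁) + shapiroCochain hH ρH rhoS f g₁ x) ∧
    -- the restriction of `s` to `H`, evaluated at `[e]`, is `f`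
    (∀ h : H, shapiroCochain hH ρH rhoS f (h : G) 1 = f h) := by
  refine ⟨?_, ?_, ?_⟩
  · intro g h x
    have hx : (h : G) * x = ((h * ρH x : H) : G) * rhoS x := by
      push_cast; rw [mul_assoc, hfact]
    obtain ⟨hρ, hσ⟩ := huniq (h * ρH x) (rhoS x) (hrhoS x)
    rw [← hx] at hρ hσ
    unfold shapiroCochain
    rw [hρ]
    simp only [hσ, mul_smul]
  · intro g₁ g₂ x
    set σ₁ := rhoS g₁ with hσ₁def
    set ξ := rhoS x with hξdef
    set c₁ : H := ⟨σ₁ * (ρH g₂ : G) * σ₁⁻¹, hH.conj_mem _ (ρH g₂).2 σ₁⟩ with hc₁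
    set a : H := ⟨ξ * (ρH g₁ : G) * ξ⁻¹, hH.conj_mem _ (ρH g₁).2 ξ⟩ with ha
    have hg12 : g₁ * g₂ = ((ρH g₁ * c₁ : H) : G) * (σ₁ * rhoS g₂) := by
      conv_lhs => rw [← hfact g₁, ← hfact g₂]
      push_cast [hc₁]
      group
      rfl
    have hx2 : x * g₁ = ((ρH x * a : H) : G) * (ξ * σ₁) := by
      conv_lhs => rw [← hfact x, ← hfact g₁]
      push_cast [ha]
      group
      rfl
    obtain ⟨hρ12, hσ12⟩ := huniq (ρH g₁ * c₁) (σ₁ * rhoS g₂)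
      (Sig.mul_mem (hrhoS g₁) (hrhoS g₂))
    rw [← hg12] at hρ12 hσ12
    obtain ⟨hρ2, hσ2⟩ := huniq (ρH x * a) (ξ * σ₁) (Sig.mul_mem (hrhoS x) (hrhoS g₁))
    rw [← hx2] at hρ2 hσ2
    unfold shapiroCochain
    simp only [hρ12, hρ2, hσ2]
    set b : H := ⟨rhoS (x * g₁) * (ρH g₂ : G) * (rhoS (x * g₁))⁻¹,
      hH.conj_mem _ (ρH g₂).2 (rhoS (x * g₁))⟩ with hb
    have key : (⟨ξ * ((ρH g₁ * c₁ : H) : G) * ξ⁻¹,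
        hH.conj_mem _ (ρH g₁ * c₁).2 ξ⟩ : H) = a * b := by
      ext
      push_cast [ha, hb, hc₁, hσ2]
      group
    rw [key, hf a b, smul_add, mul_smul]
    simp only [hb, hσ2]
    rfl
  · intro h
    have h1 : ρH (1 : G) = 1 ∧ rhoS (1 : G) = 1 := by
      simpa using huniq 1 1 Sig.one_mem
    have hh : ρH ((h : G)) = h := by
      simpa using (huniq h 1 Sig.one_mem).1
    unfold shapiroCochain
    simp only [h1.1, h1.2, hh, one_smul]
    congr 1
    ext
    simp
end
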